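/- For any finite connected graph with $V$ nodes, maximum degree $d_{\max}$, and longest (simple) path length $\ell_{\max}$, the cover time of the negative feedback walk is deterministically bounded: $T_C \leq 1 + (V-1) \cdot d_{\max}^{\ell_{\max}}$ almost surely. -/

import Mathlib

open Finset
open scoped Classical

/-- `transCount w t i j`: the number of transitions from node `i` to node `j` made by
the trajectory `w` before time `t`. -/
noncomputable def transCount {V : Type*} (w : ℕ → V) (t : ℕ) (i j : V) : ℕ :=
  ((Finset.range t).filter (fun s => w s = i ∧ w (s + 1) = j)).card

/-- A trajectory `w` is admissible for the negative feedback ("favor least") walk on the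
graph with adjacency relation `Adj`: each step goes to a neighbour of the current node
whose prior transition count from the current node is minimal. -/
def IsNegFeedbackWalk {V : Type*} (Adj : V → V → Prop) (w : ℕ → V) : Prop :=
  ∀ t : ℕ, Adj (w t) (w (t + 1)) ∧
    ∀ j : V, Adj (w t) j → transCount w t (w t) (w (t + 1)) ≤ transCount w t (w t) j

/-- Number of visits of `w` to `i` strictly before time `t`. -/
noncomputable def visitCount {V : Type*} (w : ℕ → V) (t : ℕ) (i : V) : ℕ :=
  ((Finset.range t).filter (fun s => w s = i)).card

lemma transCount_succ {V : Type*} (w : ℕ → V) (t : ℕ) (i j : V) :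
    transCount w (t + 1) i j =
      transCount w t i j + (if w t = i ∧ w (t + 1) = j then 1 else 0) := by
  unfold transCount
  rw [Finset.range_add_one, Finset.filter_insert]
  split
  · rw [Finset.card_insert_of_notMem (by simp)]
  · simp

lemma visitCount_succ {V : Type*} (w : ℕ → V) (t : ℕ) (i : V) :
    visitCount w (t + 1) i = visitCount w t i + (if w t = i then 1 else 0) := by
  unfold visitCount
  rw [Finset.range_add_one, Finset.filter_insert]
  split
  · rw [Finset.card_insert_of_notMem (by simp)]
  · simp

lemma visitCount_mono {V : Type*} (w : ℕ → V) {t t' : ℕ} (h : t ≤ t') (i : V) :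
    visitCount w t i ≤ visitCount w t' i := by
  apply Finset.card_le_card
  exact Finset.filter_subset_filter _ (Finset.range_subset_range.2 h)

/-- Counts of transitions from a fixed node to its neighbours differ by at most 1. -/
lemma transCount_balanced {V : Type*} {Adj : V → V → Prop} {w : ℕ → V}
    (hw : IsNegFeedbackWalk Adj w) (t : ℕ) (i j k : V)
    (_hj : Adj i j) (hk : Adj i k) :
    transCount w t i j ≤ transCount w t i k + 1 := by
  induction t with
  | zero => simp [transCount]
  | succ t ih =>
    rw [transCount_succ, transCount_succ]
    by_cases hc : w t = i ∧ w (t + 1) = j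
    · have h1 : transCount w t i j ≤ transCount w t i k := by
        have h2 := (hw t).2 k (by rw [hc.1]; exact hk)
        rw [hc.1, hc.2] at h2
        exact h2
      rw [if_pos hc]
      split <;> omega
    · rw [if_neg hc]
      split <;> omega

lemma sum_transCount {V : Type*} [Fintype V] [DecidableEq V] (G : SimpleGraph V)
    [DecidableRel G.Adj] {w : ℕ → V} (hw : IsNegFeedbackWalk G.Adj w) (t : ℕ) (i : V) :
    ∑ j ∈ G.neighborFinset i, transCount w t i j = visitCount w t i := by
  induction t with
  | zero => simp [transCount, visitCount]
  | succ t ih =>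
    rw [visitCount_succ, ← ih]
    simp only [transCount_succ, Finset.sum_add_distrib]
    congr 1
    by_cases hti : w t = i
    · have hmem : w (t + 1) ∈ G.neighborFinset i := by
        rw [SimpleGraph.mem_neighborFinset, ← hti]
        exact (hw t).1
      simp only [hti, true_and, if_pos]
      rw [show (∑ j ∈ G.neighborFinset i, if w (t + 1) = j then 1 else 0) =
          if w (t + 1) ∈ G.neighborFinset i then 1 else 0 from
        Finset.sum_ite_eq (G.neighborFinset i) (w (t + 1)) (fun _ => 1)]
      simp [hmem]
    · simp [hti]

/-- If `i` was departed from at least `d_i * K` times, each neighbour received at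
least `K` transitions. -/
lemma transCount_ge {V : Type*} [Fintype V] [DecidableEq V] (G : SimpleGraph V)
    [DecidableRel G.Adj] {w : ℕ → V} (hw : IsNegFeedbackWalk G.Adj w) (t K : ℕ) {i j : V}
    (hij : G.Adj i j) (hvis : G.degree i * K ≤ visitCount w t i) :
    K ≤ transCount w t i j := by
  by_contra hlt
  push_neg at hlt
  have hjm : j ∈ G.neighborFinset i := by rwa [SimpleGraph.mem_neighborFinset]
  have hsum := sum_transCount G hw t i
  have hbound : ∀ k ∈ (G.neighborFinset i).erase j,
      transCount w t i k ≤ transCount w t i j + 1 := by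
    intro k hk
    exact transCount_balanced hw t i k j
      ((SimpleGraph.mem_neighborFinset _ _ _).1 (Finset.mem_of_mem_erase hk)) hij
  have hsplit : ∑ k ∈ G.neighborFinset i, transCount w t i k
      = transCount w t i j + ∑ k ∈ (G.neighborFinset i).erase j, transCount w t i k := by
    rw [Finset.add_sum_erase _ _ hjm]
  have hle : ∑ k ∈ (G.neighborFinset i).erase j, transCount w t i k
      ≤ (G.degree i - 1) * (transCount w t i j + 1) := by
    calc ∑ k ∈ (G.neighborFinset i).erase j, transCount w t i k
        ≤ ∑ _k ∈ (G.neighborFinset i).erase j, (transCount w t i j + 1) :=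
          Finset.sum_le_sum hbound
      _ = (G.degree i - 1) * (transCount w t i j + 1) := by
          rw [Finset.sum_const, Finset.card_erase_of_mem hjm, smul_eq_mul,
            SimpleGraph.card_neighborFinset_eq_degree]
  have hdpos : 1 ≤ G.degree i := by
    have := Finset.card_pos.2 ⟨j, hjm⟩
    rwa [SimpleGraph.card_neighborFinset_eq_degree] at this
  obtain ⟨e, he⟩ : ∃ e, G.degree i = e + 1 := ⟨G.degree i - 1, by omega⟩
  rw [← hsum, hsplit] at hvis
  rw [he] at hvis hle
  simp only [Nat.add_sub_cancel] at hle
  nlinarith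

/-- One step of the chaining: a heavily visited node forces its neighbours to be
visited often, one time-step later. -/
lemma visit_step {V : Type*} [Fintype V] [DecidableEq V] (G : SimpleGraph V)
    [DecidableRel G.Adj] {w : ℕ → V} (hw : IsNegFeedbackWalk G.Adj w) {dmax : ℕ}
    (hd : ∀ v : V, G.degree v ≤ dmax) (t K : ℕ) {i j : V} (hij : G.Adj i j)
    (hvis : dmax * K ≤ visitCount w t i) :
    K ≤ visitCount w (t + 1) j := by
  have h1 : G.degree i * K ≤ visitCount w t i :=
    le_trans (Nat.mul_le_mul_right K (hd i)) hvis
  have h2 : K ≤ transCount w t i j := transCount_ge G hw t K hij h1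
  refine le_trans h2 ?_
  unfold transCount visitCount
  apply Finset.card_le_card_of_injOn (fun s => s + 1)
  · intro s hs
    simp only [Finset.mem_coe, Finset.mem_filter, Finset.mem_range] at hs ⊢
    exact ⟨by omega, hs.2.2⟩
  · intro a _ b _ hab
    simpa using hab

/-- Chaining along a walk. -/
lemma visit_chain {V : Type*} [Fintype V] [DecidableEq V] (G : SimpleGraph V)
    [DecidableRel G.Adj] {w : ℕ → V} (hw : IsNegFeedbackWalk G.Adj w) {dmax : ℕ}
    (hd : ∀ v : V, G.degree v ≤ dmax) {u v : V} (p : G.Walk u v) :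
    ∀ t0 : ℕ, dmax ^ p.length ≤ visitCount w t0 u →
      1 ≤ visitCount w (t0 + p.length) v := by
  induction p with
  | nil =>
    intro t0 h
    simpa using le_trans (by simp) h
  | @cons a b c hab q ih =>
    intro t0 h
    have hstep : dmax ^ q.length ≤ visitCount w (t0 + 1) b := by
      apply visit_step G hw hd t0 _ hab
      refine le_trans ?_ h
      rw [SimpleGraph.Walk.length_cons, pow_succ]
      exact le_of_eq (mul_comm _ _)
    have := ih (t0 + 1) hstep
    rw [SimpleGraph.Walk.length_cons]
    convert this using 2
    omega

/-- on any finite connected graph with `V` nodes, maximum degree `d_max`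
and longest simple path length `ℓ_max`, every negative feedback walk covers all nodes
within `1 + (V - 1) * d_max ^ ℓ_max` steps (so `T_C ≤ 1 + (V-1) d_max^{ℓ_max}` surely). -/
theorem negFeedback_cover_bounded {V : Type*} [Fintype V] [DecidableEq V]
    (G : SimpleGraph V) [DecidableRel G.Adj] (hconn : G.Connected)
    (w : ℕ → V) (hw : IsNegFeedbackWalk G.Adj w)
    (dmax lmax : ℕ)
    (hd : dmax = Finset.univ.sup (fun v => G.degree v))
    (hl : lmax = sSup {n : ℕ | ∃ (u v : V) (p : G.Walk u v), p.IsPath ∧ p.length = n}) :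
    ∀ v : V, ∃ t : ℕ, t ≤ 1 + (Fintype.card V - 1) * dmax ^ lmax ∧ w t = v := by
  intro v
  by_contra hcon
  push_neg at hcon
  set n := Fintype.card V with hn
  set D := dmax ^ lmax with hD
  set B := 1 + (n - 1) * D with hB
  have hcon' : ∀ t ≤ B, w t ≠ v := hcon
  -- basic facts
  have hdub : ∀ x : V, G.degree x ≤ dmax := by
    intro x; rw [hd]; exact Finset.le_sup (f := fun v => G.degree v) (Finset.mem_univ x)
  have hadj01 : G.Adj (w 0) (w 1) := (hw 0).1
  have hdpos : 1 ≤ dmax := by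
    have h1 : 0 < G.degree (w 0) :=
      (G.degree_pos_iff_exists_adj (w 0)).2 ⟨w 1, hadj01⟩
    exact le_trans h1 (hdub (w 0))
  have hDpos : 1 ≤ D := Nat.one_le_pow lmax dmax hdpos
  have hcard2 : 2 ≤ n := by
    rw [hn]
    rw [show (2 : ℕ) = 1 + 1 from rfl]
    exact Fintype.one_lt_card_iff.2 ⟨w 0, v, hcon' 0 (by omega)⟩
  -- the set of path lengths
  set S : Set ℕ := {m : ℕ | ∃ (u v : V) (p : G.Walk u v), p.IsPath ∧ p.length = m} with hS
  have hSne : S.Nonempty := ⟨0, v, v, SimpleGraph.Walk.nil, SimpleGraph.Walk.IsPath.nil, rfl⟩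
  have hSub : ∀ m ∈ S, m ≤ n - 1 := by
    rintro m ⟨a, b, p, hp, rfl⟩
    have := hp.length_lt
    omega
  have hlmax : lmax ≤ n - 1 := by
    rw [hl]
    exact csSup_le hSne hSub
  -- pigeonhole: some node visited at least D times before time B - lmax
  set N := B - lmax with hNdef
  have hNB : N ≤ B := Nat.sub_le _ _
  have hmul : (n - 1) * (D - 1) + (n - 1) = (n - 1) * D := by
    have h0 : D - 1 + 1 = D := by omega
    calc (n - 1) * (D - 1) + (n - 1) = (n - 1) * (D - 1 + 1) := by ring
      _ = (n - 1) * D := by rw [h0]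
  have hpig : (n - 1) * (D - 1) < N := by omega
  obtain ⟨u, _, hu⟩ :
      ∃ y ∈ Finset.univ.erase v, D - 1 < ((Finset.range N).filter (fun s => w s = y)).card := by
    apply Finset.exists_lt_card_fiber_of_mul_lt_card_of_maps_to
    · intro s hs
      rw [Finset.mem_range] at hs
      exact Finset.mem_erase.2 ⟨hcon' s (by omega), Finset.mem_univ _⟩
    · rwa [Finset.card_range, Finset.card_erase_of_mem (Finset.mem_univ v),
        Finset.card_univ]
  have huD : D ≤ visitCount w N u := by
    unfold visitCount
    rw [Finset.filter_congr_decidable] at hu ⊢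
    omega
  -- path from u to v
  obtain ⟨q⟩ := hconn.preconnected u v
  set p := q.toPath with hpdef
  set L := (p : G.Walk u v).length with hL
  have hLlmax : L ≤ lmax := by
    rw [hl]
    exact le_csSup ⟨n - 1, hSub⟩ ⟨u, v, p, p.2, rfl⟩
  have hLB : L ≤ B := by
    have h1 : n - 1 ≤ (n - 1) * D := Nat.le_mul_of_pos_right _ hDpos
    have h2 : L ≤ n - 1 := le_trans hLlmax hlmax
    omega
  -- chain
  have hmono : visitCount w N u ≤ visitCount w (B - L) u :=
    visitCount_mono w (by omega) u
  have hpow : dmax ^ L ≤ D := by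
    rw [hD]
    exact Nat.pow_le_pow_right hdpos hLlmax
  have hchain : 1 ≤ visitCount w (B - L + L) v :=
    visit_chain G hw hdub (p : G.Walk u v) (B - L)
      (le_trans hpow (le_trans huD hmono))
  rw [Nat.sub_add_cancel hLB] at hchain
  obtain ⟨s, hs⟩ := Finset.card_pos.1 hchain
  simp only [Finset.mem_filter, Finset.mem_range] at hs
  exact hcon' s (by omega) hs.2
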